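/- Main amortized analysis theorem: for all lists bl and fl, the batched queue with state (bl, fl) is amortized-equivalent (≈) to step (length bl) applied to the single-list specification queue on fl ++ reverse bl. -/

import Mathlib

/-- The polynomial functor whose final coalgebra is the coinductive queue
interface: `quit : ℕ`, `enqueue : E → Queue`, `dequeue : ℕ × (Option E × Queue)`.
A node carries `(quit cost, dequeue cost, dequeued element)` and has children
indexed by `Option E`: `some e` is the queue after enqueuing `e`, `none` is the
successor queue after dequeuing. -/
def QueueF (E : Type) : PFunctor := ⟨ℕ × ℕ × Option E, fun _ => Option E⟩

/-- The coinductive queue interface: the final coalgebra of `QueueF`. -/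
def Queue (E : Type) : Type := (QueueF E).M

namespace Queue

variable {E : Type}

/-- The final cost. -/
def quit (q : Queue E) : ℕ := (PFunctor.M.dest q).1.1

/-- The cost of the next dequeue. -/
def deqCost (q : Queue E) : ℕ := (PFunctor.M.dest q).1.2.1

/-- The optional element returned by the next dequeue. -/
def deqElem (q : Queue E) : Option E := (PFunctor.M.dest q).1.2.2

/-- The queue after enqueuing an element. -/
def enqueue (q : Queue E) (e : E) : Queue E := (PFunctor.M.dest q).2 (some e)

/-- The successor queue after dequeuing. -/
def deqNext (q : Queue E) : Queue E := (PFunctor.M.dest q).2 none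

/-- The dequeue method: a cost paired with an optional element and successor queue. -/
def dequeue (q : Queue E) : ℕ × (Option E × Queue E) := (deqCost q, deqElem q, deqNext q)

/-- `step c q` adds cost `c` to the `quit` cost and to the cost of the first
`dequeue`, and propagates `step c` through `enqueue`. -/
def step (c : ℕ) (q : Queue E) : Queue E :=
  PFunctor.M.corec
    (fun s : ℕ × Queue E =>
      ⟨(s.1 + quit s.2, s.1 + deqCost s.2, deqElem s.2),
       fun o =>
         match o with
         | some e => (s.1, enqueue s.2 e)
         | none => (0, deqNext s.2)⟩)
    (c, q)

/-- A relation is a bisimulation if related queues have equal observations and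
related successors. -/
def IsBisim (R : Queue E → Queue E → Prop) : Prop :=
  ∀ q₁ q₂, R q₁ q₂ →
    quit q₁ = quit q₂ ∧
    (∀ e, R (enqueue q₁ e) (enqueue q₂ e)) ∧
    deqCost q₁ = deqCost q₂ ∧
    deqElem q₁ = deqElem q₂ ∧
    R (deqNext q₁) (deqNext q₂)

/-- Bisimilarity: the largest bisimulation. -/
def Bisim (q₁ q₂ : Queue E) : Prop := ∃ R, IsBisim R ∧ R q₁ q₂

/-- A relation is an amortized bisimulation if related queues have equal quit
costs, related enqueues, equal dequeued elements, and successors related after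
pushing the respective dequeue costs onto them via `step`. -/
def IsAmortizedBisim (R : Queue E → Queue E → Prop) : Prop :=
  ∀ q₁ q₂, R q₁ q₂ →
    quit q₁ = quit q₂ ∧
    (∀ e, R (enqueue q₁ e) (enqueue q₂ e)) ∧
    deqElem q₁ = deqElem q₂ ∧
    R (step (deqCost q₁) (deqNext q₁)) (step (deqCost q₂) (deqNext q₂))

/-- Amortized equivalence `≈`: the largest amortized bisimulation. -/
def AmortEquiv (q₁ q₂ : Queue E) : Prop := ∃ R, IsAmortizedBisim R ∧ R q₁ q₂

/-- The single-list specification queue, with a pending cost `c` already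
`step`ped onto it.  `quit (QUEUEaux (c, l)) = c`; enqueue costs `1` (added to
the pending cost) and appends to the end; dequeue costs the pending cost and
removes the head. -/
def QUEUEaux : ℕ × List E → Queue E :=
  PFunctor.M.corec fun s =>
    match s with
    | (c, []) =>
      ⟨(c, c, none), fun o =>
        match o with
        | some e => (c + 1, [e])
        | none => (0, [])⟩
    | (c, e :: l) =>
      ⟨(c, c, some e), fun o =>
        match o with
        | some e' => (c + 1, e :: (l ++ [e']))
        | none => (0, l)⟩

/-- The single-list specification queue: `quit` costs 0, `enqueue e` is
`step 1` of the queue on `l ++ [e]`, `dequeue` costs 0 and removes the head. -/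
def QUEUE (l : List E) : Queue E := QUEUEaux (0, l)

/-- The batched queue on state `(bl, fl)`: `quit` pays the potential
`length bl`; `enqueue` conses onto `bl` for free; `dequeue` pops the head of
`fl` for free, or, if `fl` is empty, reverses `bl` at cost `length bl`. -/
def batchedQueue : List E × List E → Queue E :=
  PFunctor.M.corec fun s =>
    match s with
    | (bl, e :: fl) =>
      ⟨(bl.length, 0, some e), fun o =>
        match o with
        | some e' => (e' :: bl, e :: fl)
        | none => (bl, fl)⟩
    | (bl, []) =>
      match bl.reverse with
      | [] =>
        ⟨(bl.length, 0, none), fun o =>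
          match o with
          | some e' => (e' :: bl, [])
          | none => ([], [])⟩
      | e :: fl' =>
        ⟨(bl.length, bl.length, some e), fun o =>
          match o with
          | some e' => (e' :: bl, [])
          | none => ([], fl')⟩

end Queue

namespace Queue
variable {E : Type}

lemma quit_step (c : ℕ) (q : Queue E) : quit (step c q) = c + quit q := by
  change (PFunctor.M.dest (step c q)).1.1 = _
  simp only [step, PFunctor.M.dest_corec]; rfl

lemma deqCost_step (c : ℕ) (q : Queue E) : deqCost (step c q) = c + deqCost q := by
  change (PFunctor.M.dest (step c q)).1.2.1 = _
  simp only [step, PFunctor.M.dest_corec]; rfl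

lemma deqElem_step (c : ℕ) (q : Queue E) : deqElem (step c q) = deqElem q := by
  change (PFunctor.M.dest (step c q)).1.2.2 = _
  simp only [step, PFunctor.M.dest_corec]; rfl

lemma enqueue_step (c : ℕ) (q : Queue E) (e : E) :
    enqueue (step c q) e = step c (enqueue q e) := by
  simp only [enqueue, step, PFunctor.M.dest_corec]; rfl

lemma deqNext_step (c : ℕ) (q : Queue E) :
    deqNext (step c q) = step 0 (deqNext q) := by
  simp only [deqNext, step, PFunctor.M.dest_corec]; rfl

lemma quit_QUEUEaux (c : ℕ) (l : List E) : quit (QUEUEaux (c, l)) = c := by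
  cases l <;> simp [quit, QUEUEaux, PFunctor.M.dest_corec, PFunctor.map]

lemma deqCost_QUEUEaux (c : ℕ) (l : List E) : deqCost (QUEUEaux (c, l)) = c := by
  cases l <;> simp [deqCost, QUEUEaux, PFunctor.M.dest_corec, PFunctor.map]

lemma deqElem_QUEUEaux (c : ℕ) (l : List E) : deqElem (QUEUEaux (c, l)) = l.head? := by
  cases l <;> simp [deqElem, QUEUEaux, PFunctor.M.dest_corec, PFunctor.map]

lemma enqueue_QUEUEaux (c : ℕ) (l : List E) (e : E) :
    enqueue (QUEUEaux (c, l)) e = QUEUEaux (c + 1, l ++ [e]) := by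
  cases l <;> (simp only [enqueue, QUEUEaux, PFunctor.M.dest_corec]; rfl)

lemma deqNext_QUEUEaux (c : ℕ) (l : List E) :
    deqNext (QUEUEaux (c, l)) = QUEUEaux (0, l.tail) := by
  cases l <;> (simp only [deqNext, QUEUEaux, PFunctor.M.dest_corec]; rfl)

/-- Generic coinduction principle specialized to our observations. -/
lemma queue_ext (R : Queue E → Queue E → Prop)
    (h : ∀ x y, R x y →
      quit x = quit y ∧ deqCost x = deqCost y ∧ deqElem x = deqElem y ∧
      (∀ e, R (enqueue x e) (enqueue y e)) ∧ R (deqNext x) (deqNext y)) :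
    ∀ x y, R x y → x = y := by
  apply PFunctor.M.bisim
  intro x y hxy
  obtain ⟨h1, h2, h3, h4, h5⟩ := h x y hxy
  refine ⟨(PFunctor.M.dest x).1, (PFunctor.M.dest x).2, (PFunctor.M.dest y).2, rfl, ?_, ?_⟩
  · have hh : (PFunctor.M.dest x).1 = (PFunctor.M.dest y).1 := by
      unfold quit at h1; unfold deqCost at h2; unfold deqElem at h3
      exact Prod.ext h1 (Prod.ext h2 h3)
    rw [hh]; exact Sigma.eta _ |>.symm
  · rintro (_ | e)
    · exact h5
    · exact h4 e

lemma step_step (a b : ℕ) (q : Queue E) : step a (step b q) = step (a + b) q := by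
  apply queue_ext (fun x y => ∃ a b q, x = step a (step b q) ∧ y = step (a + b) q)
  · rintro x y ⟨a, b, q, rfl, rfl⟩
    refine ⟨by simp [quit_step, Nat.add_assoc], by simp [deqCost_step, Nat.add_assoc],
      by simp [deqElem_step], fun e => ⟨a, b, enqueue q e, by simp [enqueue_step]⟩,
      ⟨0, 0, deqNext q, by simp [deqNext_step]⟩⟩
  · exact ⟨a, b, q, rfl, rfl⟩

lemma step_zero (q : Queue E) : step 0 q = q := by
  apply queue_ext (fun x y => x = step 0 y)
  · rintro x y rfl
    exact ⟨by simp [quit_step], by simp [deqCost_step], by simp [deqElem_step],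
      fun e => by simp [enqueue_step], by simp [deqNext_step]⟩
  · rfl

lemma step_QUEUEaux (c d : ℕ) (l : List E) :
    step c (QUEUEaux (d, l)) = QUEUEaux (c + d, l) := by
  apply queue_ext (fun x y => ∃ c d l, x = step c (QUEUEaux (d, l)) ∧ y = QUEUEaux (c + d, l))
  · rintro x y ⟨c, d, l, rfl, rfl⟩
    refine ⟨by simp [quit_step, quit_QUEUEaux], by simp [deqCost_step, deqCost_QUEUEaux],
      by simp [deqElem_step, deqElem_QUEUEaux], fun e => ?_, ?_⟩
    · exact ⟨c, d + 1, l ++ [e],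
        by simp [enqueue_step, enqueue_QUEUEaux, Nat.add_assoc]⟩
    · exact ⟨0, 0, l.tail, by simp [deqNext_step, deqNext_QUEUEaux]⟩
  · exact ⟨c, d, l, rfl, rfl⟩

lemma quit_batched_cons (bl fl : List E) (e : E) :
    quit (batchedQueue (bl, e :: fl)) = bl.length := by
  simp [quit, batchedQueue, PFunctor.M.dest_corec, PFunctor.map]

lemma deqCost_batched_cons (bl fl : List E) (e : E) :
    deqCost (batchedQueue (bl, e :: fl)) = 0 := by
  simp [deqCost, batchedQueue, PFunctor.M.dest_corec, PFunctor.map]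

lemma deqElem_batched_cons (bl fl : List E) (e : E) :
    deqElem (batchedQueue (bl, e :: fl)) = some e := by
  simp [deqElem, batchedQueue, PFunctor.M.dest_corec, PFunctor.map]

lemma enqueue_batched_cons (bl fl : List E) (e e' : E) :
    enqueue (batchedQueue (bl, e :: fl)) e' = batchedQueue (e' :: bl, e :: fl) := by
  simp only [enqueue, batchedQueue, PFunctor.M.dest_corec]; rfl

lemma deqNext_batched_cons (bl fl : List E) (e : E) :
    deqNext (batchedQueue (bl, e :: fl)) = batchedQueue (bl, fl) := by
  simp only [deqNext, batchedQueue, PFunctor.M.dest_corec]; rfl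

/-- The one-step unfolding of the batched queue on an empty front list. -/
def batchNilAux (bl : List E) : (QueueF E) (List E × List E) :=
  match bl.reverse with
  | [] =>
    ⟨(bl.length, 0, none), fun o =>
      match o with
      | some e' => (e' :: bl, [])
      | none => ([], [])⟩
  | e :: fl' =>
    ⟨(bl.length, bl.length, some e), fun o =>
      match o with
      | some e' => (e' :: bl, [])
      | none => ([], fl')⟩

lemma dest_batched_nil (bl : List E) :
    PFunctor.M.dest (batchedQueue (bl, [])) =
      (QueueF E).map batchedQueue (batchNilAux bl) := by
  unfold batchedQueue
  rw [PFunctor.M.dest_corec]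
  rfl

lemma quit_batched_nil (bl : List E) :
    quit (batchedQueue (bl, [])) = bl.length := by
  rw [quit, dest_batched_nil]
  unfold batchNilAux
  rcases bl.reverse with _ | ⟨e, fl'⟩ <;> rfl

lemma deqCost_batched_nil_nil (bl : List E) (hr : bl.reverse = []) :
    deqCost (batchedQueue (bl, [])) = 0 := by
  rw [deqCost, dest_batched_nil]; unfold batchNilAux; rw [hr]; rfl

lemma deqCost_batched_nil_cons (bl fl' : List E) (e : E) (hr : bl.reverse = e :: fl') :
    deqCost (batchedQueue (bl, [])) = bl.length := by
  rw [deqCost, dest_batched_nil]; unfold batchNilAux; rw [hr]; rfl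

lemma deqElem_batched_nil_nil (bl : List E) (hr : bl.reverse = []) :
    deqElem (batchedQueue (bl, [])) = none := by
  rw [deqElem, dest_batched_nil]; unfold batchNilAux; rw [hr]; rfl

lemma deqElem_batched_nil_cons (bl fl' : List E) (e : E) (hr : bl.reverse = e :: fl') :
    deqElem (batchedQueue (bl, [])) = some e := by
  rw [deqElem, dest_batched_nil]; unfold batchNilAux; rw [hr]; rfl

lemma enqueue_batched_nil (bl : List E) (e' : E) :
    enqueue (batchedQueue (bl, [])) e' = batchedQueue (e' :: bl, []) := by
  rw [enqueue, dest_batched_nil]; unfold batchNilAux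
  rcases bl.reverse with _ | ⟨e, fl'⟩ <;> rfl

lemma deqNext_batched_nil_nil (bl : List E) (hr : bl.reverse = []) :
    deqNext (batchedQueue (bl, [])) = batchedQueue ([], []) := by
  rw [deqNext, dest_batched_nil]; unfold batchNilAux; rw [hr]; rfl

lemma deqNext_batched_nil_cons (bl fl' : List E) (e : E) (hr : bl.reverse = e :: fl') :
    deqNext (batchedQueue (bl, [])) = batchedQueue ([], fl') := by
  rw [deqNext, dest_batched_nil]; unfold batchNilAux; rw [hr]; rfl

end Queue

/-- Finite queue programs: return, enqueue an element and continue, or dequeue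
and continue with a cost and program depending on the dequeued element. -/
inductive Program (E : Type) : Type
  | ret : Program E
  | enq : E → Program E → Program E
  | deq : (Option E → ℕ) → (Option E → Program E) → Program E

namespace Queue

/-- Evaluation of a program on a queue, summing all incurred costs including
the final `quit` cost. -/
def psi {E : Type} : Program E → Queue E → ℕ
  | .ret, q => quit q
  | .enq e p, q => psi p (enqueue q e)
  | .deq c f, q =>
    deqCost q + c (deqElem q) + psi (f (deqElem q)) (deqNext q)

end Queue

theorem batchedQueue_amortized_analysis {E : Type} (bl fl : List E) :
    Queue.AmortEquiv (Queue.batchedQueue (bl, fl))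
      (Queue.step bl.length (Queue.QUEUE (fl ++ bl.reverse))) := by
  open Queue in
  refine ⟨fun q1 q2 => ∃ c bl fl, q1 = step c (batchedQueue (bl, fl)) ∧
      q2 = QUEUEaux (c + bl.length, fl ++ bl.reverse), ?_, ?_⟩
  · rintro q1 q2 ⟨c, bl, fl, rfl, rfl⟩
    rcases fl with _ | ⟨e, fl⟩
    · rcases hr : bl.reverse with _ | ⟨e, fl'⟩
      · -- empty front, empty back
        obtain rfl : bl = [] := List.reverse_eq_nil_iff.mp hr
        refine ⟨?_, fun e' => ?_, ?_, ?_⟩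
        · rw [quit_step, quit_batched_nil, quit_QUEUEaux]
        · rw [enqueue_step, enqueue_batched_nil, enqueue_QUEUEaux]
          exact ⟨c, [e'], [], rfl, by simp⟩
        · rw [deqElem_step, deqElem_batched_nil_nil _ hr, deqElem_QUEUEaux]
          simp
        · rw [deqCost_step, deqCost_batched_nil_nil _ hr, deqNext_step,
            deqNext_batched_nil_nil _ hr, step_step, deqCost_QUEUEaux,
            deqNext_QUEUEaux, step_QUEUEaux]
          exact ⟨c + 0 + 0, [], [], rfl, by simp⟩
      · -- empty front, nonempty back
        refine ⟨?_, fun e' => ?_, ?_, ?_⟩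
        · rw [quit_step, quit_batched_nil, quit_QUEUEaux]
        · rw [enqueue_step, enqueue_batched_nil, enqueue_QUEUEaux]
          exact ⟨c, e' :: bl, [], rfl, by simp [Nat.add_assoc, hr]⟩
        · rw [deqElem_step, deqElem_batched_nil_cons _ _ _ hr, deqElem_QUEUEaux]
          simp [hr]
        · rw [deqCost_step, deqCost_batched_nil_cons _ _ _ hr, deqNext_step,
            deqNext_batched_nil_cons _ _ _ hr, step_step, deqCost_QUEUEaux,
            deqNext_QUEUEaux, step_QUEUEaux]
          exact ⟨c + bl.length + 0, [], fl', rfl, by simp [hr]⟩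
    · -- nonempty front
      refine ⟨?_, fun e' => ?_, ?_, ?_⟩
      · rw [quit_step, quit_batched_cons, quit_QUEUEaux]
      · rw [enqueue_step, enqueue_batched_cons, enqueue_QUEUEaux]
        exact ⟨c, e' :: bl, e :: fl, rfl, by simp [Nat.add_assoc, List.append_assoc]⟩
      · rw [deqElem_step, deqElem_batched_cons, deqElem_QUEUEaux]
        simp
      · rw [deqCost_step, deqCost_batched_cons, deqNext_step, deqNext_batched_cons,
          step_step, deqCost_QUEUEaux, deqNext_QUEUEaux, step_QUEUEaux]
        exact ⟨c + 0 + 0, bl, fl, rfl, by simp⟩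
  · refine ⟨0, bl, fl, (Queue.step_zero _).symm, ?_⟩
    rw [Queue.QUEUE, Queue.step_QUEUEaux]
    simp
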